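/- A partition σ of n satisfies δ(σ) = 0 and δ*(σ) = 0 (for the bosonic δ, δ*) if and only if σ has the form ((n_1)^{n_1+2s}, (n_2)^{2t_2}, ..., (n_k)^{2t_k}) with n_1 > n_2 > ... > n_k > 0, s ≥ 0, and t_2,...,t_k ≥ 1, i.e., the multiplicity of the largest part exceeds the largest part by a nonnegative even number and all other multiplicities are even. -/

import Mathlib

/-- A partition of `n` in multiplicity (block) notation: a list of blocks
`(nᵢ, mᵢ)` with strictly decreasing positive part sizes `nᵢ`, positive
multiplicities `mᵢ`, and `∑ nᵢ · mᵢ = n`. -/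
def IsBlockPartition (n : ℕ) (σ : List (ℕ × ℕ)) : Prop :=
  (σ.map Prod.fst).Pairwise (· > ·) ∧ (∀ b ∈ σ, 0 < b.1 ∧ 0 < b.2) ∧
    (σ.map fun b => b.1 * b.2).sum = n

/-- The number of parts (the length) of a block partition. -/
def blockLength (σ : List (ℕ × ℕ)) : ℕ := (σ.map Prod.snd).sum

/-- Insert a single new part of size `p` into a block list, subject to the evenness
conditions: all multiplicities of blocks at or to the right of the insertion point must
be even (when inserting at the very end there is no condition); returns `none` when the
condition fails. -/
def insertPart (p : ℕ) : List (ℕ × ℕ) → Option (List (ℕ × ℕ))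
  | [] => some [(p, 1)]
  | (a, m) :: t =>
    if a < p then
      if ∀ b ∈ (a, m) :: t, Even b.2 then some ((p, 1) :: (a, m) :: t) else none
    else if a = p then
      if ∀ b ∈ (a, m) :: t, Even b.2 then some ((a, m + 1) :: t) else none
    else
      (insertPart p t).map fun t' => (a, m) :: t'

/-- Merge a block onto the front of a block list, combining blocks of equal part
size. -/
def mergeHead (b : ℕ × ℕ) : List (ℕ × ℕ) → List (ℕ × ℕ)
  | [] => [b]
  | (a, m) :: t => if a = b.1 then (b.1, b.2 + m) :: t else b :: (a, m) :: t

/-- The bosonic coboundary map `δ` on ordinary partitions in block notation: split the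
top block `(n₁)^{m₁}` into `(n₁-1)^{m₁}` and a new single part of size `m₁`, which is
inserted in its correct position (merging equal part sizes), provided `m₁ ≤ n₁ - 1` and
all multiplicities at or to the right of the insertion point are even; otherwise `δσ = 0`
(`none`). -/
def deltaB : List (ℕ × ℕ) → Option (List (ℕ × ℕ))
  | [] => none
  | (n1, m1) :: rest =>
    if n1 - 1 < m1 then none
    else (insertPart m1 rest).map (mergeHead (n1 - 1, m1))

/-- Find the last block with odd multiplicity in a block list; if found at index
`t ≥ 1` (0-based: within this tail), return its part size `n_t` together with the list
in which its multiplicity has been decreased by one (omitting the block if it becomes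
empty). -/
def removeLastOdd : List (ℕ × ℕ) → Option (ℕ × List (ℕ × ℕ))
  | [] => none
  | (a, m) :: t =>
    match removeLastOdd t with
    | some (nt, t') => some (nt, (a, m) :: t')
    | none => if ¬ Even m then some (a, if m = 1 then t else (a, m - 1) :: t) else none

/-- The bosonic map `δ*` on ordinary partitions in block notation.  Let `t` be the
maximal index with `m_t` odd (if any).  If `t = 1` or all multiplicities are even:
`δ*σ = 0` unless `m₁ = n₁ + 2i + 1` for some `i ≥ 0`, in which case
`δ*σ = ((n₁+1)^{n₁}, (n₁)^{2i}, (n₂)^{m₂}, …)` (omitting empty blocks).  If `t ≥ 2`: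
`δ*σ = 0` if `n_t > m₁`; otherwise
`δ*σ = ((n₁+1)^{n_t}, (n₁)^{m₁-n_t}, …, (n_t)^{m_t-1}, …)` (omitting empty blocks). -/
def deltaStarB : List (ℕ × ℕ) → Option (List (ℕ × ℕ))
  | [] => none
  | (n1, m1) :: rest =>
    match removeLastOdd rest with
    | some (nt, rest') =>
      if m1 < nt then none
      else some ((n1 + 1, nt) ::
        (if m1 - nt = 0 then rest' else (n1, m1 - nt) :: rest'))
    | none =>
      if n1 < m1 ∧ ¬ Even (m1 - n1) then
        some ((n1 + 1, n1) ::
          (if m1 - n1 - 1 = 0 then rest else (n1, m1 - n1 - 1) :: rest))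
      else none

lemma removeLastOdd_eq_none (l : List (ℕ × ℕ)) :
    removeLastOdd l = none ↔ ∀ b ∈ l, Even b.2 := by
  induction l with
  | nil => simp [removeLastOdd]
  | cons h t ih =>
    obtain ⟨a, m⟩ := h
    simp only [removeLastOdd]
    cases hr : removeLastOdd t with
    | some p => simp only [hr] at ih ⊢
                simp only [reduceCtorEq, false_iff, not_forall] at ih ⊢
                obtain ⟨b, hb, hbe⟩ := ih
                exact ⟨b, List.mem_cons_of_mem _ hb, hbe⟩
    | none =>
      rw [hr] at ih
      constructor
      · intro h b hb
        by_cases hm : Even m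
        · rcases List.mem_cons.mp hb with rfl | hb
          · exact hm
          · exact ih.mp rfl b hb
        · simp [hm] at h
      · intro h
        have hm : Even m := h (a, m) (List.mem_cons_self)
        simp [hm]

lemma removeLastOdd_eq_some (l : List (ℕ × ℕ)) (nt : ℕ) (l' : List (ℕ × ℕ))
    (h : removeLastOdd l = some (nt, l')) :
    ∃ pre m suf, l = pre ++ (nt, m) :: suf ∧ ¬ Even m ∧ ∀ b ∈ suf, Even b.2 := by
  induction l generalizing l' with
  | nil => simp [removeLastOdd] at h
  | cons hd t ih =>
    obtain ⟨a, m⟩ := hd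
    simp only [removeLastOdd] at h
    cases hr : removeLastOdd t with
    | some p =>
      obtain ⟨nt2, t'⟩ := p
      rw [hr] at h
      simp only [Option.some.injEq, Prod.mk.injEq] at h
      obtain ⟨rfl, rfl⟩ := h
      obtain ⟨pre, mm, suf, heq, hodd, hev⟩ := ih t' hr
      exact ⟨(a, m) :: pre, mm, suf, by rw [heq]; rfl, hodd, hev⟩
    | none =>
      rw [hr] at h
      by_cases hm : Even m
      · simp [hm] at h
      · simp only [hm, if_neg, not_false_iff, ite_true, Option.some.injEq,
          Prod.mk.injEq] at h
        refine ⟨[], m, t, ?_, hm, (removeLastOdd_eq_none t).mp hr⟩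
        simp [h.1]

lemma insertPart_isSome (p : ℕ) (l : List (ℕ × ℕ))
    (h : ∀ b ∈ l, b.1 ≤ p → Even b.2)
    (hs : (l.map Prod.fst).Pairwise (· > ·)) :
    ∃ l', insertPart p l = some l' := by
  induction l with
  | nil => exact ⟨[(p, 1)], rfl⟩
  | cons hd t ih =>
    obtain ⟨a, m⟩ := hd
    simp only [List.map_cons, List.pairwise_cons] at hs
    have hall : a ≤ p → ∀ b ∈ (a, m) :: t, Even b.2 := by
      intro hap b hb
      rcases List.mem_cons.mp hb with rfl | hb
      · exact h _ (List.mem_cons_self) hap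
      · exact h b (List.mem_cons_of_mem _ hb)
          (le_of_lt (lt_of_lt_of_le (hs.1 _ ((List.mem_map_of_mem (f := Prod.fst) hb))) hap))
    simp only [insertPart]
    by_cases h1 : a < p
    · rw [if_pos h1, if_pos (hall (le_of_lt h1))]
      exact ⟨_, rfl⟩
    · rw [if_neg h1]
      by_cases h2 : a = p
      · rw [if_pos h2, if_pos (hall (le_of_eq h2))]
        exact ⟨_, rfl⟩
      · rw [if_neg h2]
        obtain ⟨t', ht'⟩ := ih (fun b hb => h b (List.mem_cons_of_mem _ hb)) hs.2
        exact ⟨(a, m) :: t', by rw [ht']; rfl⟩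

/-- Harmonic characterization: a partition `σ` of `n ≥ 1` satisfies `δσ = 0` and
`δ*σ = 0` iff it has the form `((n₁)^{n₁+2s}, (n₂)^{2t₂}, …, (n_k)^{2t_k})`, i.e. the
multiplicity of the largest part exceeds the largest part by a nonnegative even number
and all other multiplicities are even. -/
theorem harmonicB_characterization (n : ℕ) (hn : 0 < n) (σ : List (ℕ × ℕ))
    (hσ : IsBlockPartition n σ) :
    (deltaB σ = none ∧ deltaStarB σ = none) ↔
      ∃ (a m : ℕ) (rest : List (ℕ × ℕ)), σ = (a, m) :: rest ∧
        a ≤ m ∧ Even (m - a) ∧ ∀ b ∈ rest, Even b.2 := by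
  obtain ⟨hsort, hpos, hsum⟩ := hσ
  -- σ is nonempty
  obtain ⟨⟨n1, m1⟩, rest, rfl⟩ : ∃ h t, σ = h :: t := by
    cases σ with
    | nil => simp at hsum; omega
    | cons h t => exact ⟨h, t, rfl⟩
  simp only [List.map_cons, List.pairwise_cons] at hsort
  have hn1 : 0 < n1 := (hpos _ (List.mem_cons_self)).1
  constructor
  · rintro ⟨hd, hds⟩
    refine ⟨n1, m1, rest, rfl, ?_⟩
    simp only [deltaStarB] at hds
    cases hr : removeLastOdd rest with
    | some p =>
      obtain ⟨nt, rest'⟩ := p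
      rw [hr] at hds
      -- δ* = none forces m1 < nt
      have hm1nt : m1 < nt := by
        by_contra hc
        simp [hc] at hds
      exfalso
      obtain ⟨pre, mm, suf, heq, hodd, hev⟩ := removeLastOdd_eq_some rest nt rest' hr
      -- nt < n1
      have hntn1 : n1 > nt := by
        apply hsort.1
        rw [heq]
        simp
      -- insertPart m1 rest succeeds
      have hins : ∃ l', insertPart m1 rest = some l' := by
        apply insertPart_isSome m1 rest _ hsort.2
        intro b hb hble
        rw [heq] at hb
        rcases List.mem_append.mp hb with hb | hb
        · exfalso
          have : (rest.map Prod.fst).Pairwise (· > ·) := hsort.2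
          rw [heq] at this
          have hgt : b.1 > nt := by
            rw [List.map_append, List.map_cons] at this
            have := (List.pairwise_append.mp this).2.2 b.1
              (List.mem_map_of_mem (f := Prod.fst) hb) nt (by simp)
            exact this
          omega
        · rcases List.mem_cons.mp hb with rfl | hb
          · omega
          · exact hev b hb
      obtain ⟨l', hl'⟩ := hins
      simp only [deltaB, hl'] at hd
      rw [if_neg (by omega)] at hd
      simp at hd
    | none =>
      rw [hr] at hds
      have heven : ∀ b ∈ rest, Even b.2 := (removeLastOdd_eq_none rest).mp hr
      have hcond : ¬ (n1 < m1 ∧ ¬ Even (m1 - n1)) := by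
        intro hc
        rw [if_pos hc] at hds
        simp at hds
      -- δ = none forces n1 - 1 < m1 since insertPart succeeds
      obtain ⟨l', hl'⟩ := insertPart_isSome m1 rest
        (fun b hb _ => heven b hb) hsort.2
      have hle : n1 ≤ m1 := by
        by_contra hc
        simp only [deltaB, hl'] at hd
        rw [if_neg (by omega)] at hd
        simp at hd
      refine ⟨hle, ?_, heven⟩
      rcases eq_or_lt_of_le hle with rfl | hlt
      · simp
      · by_contra hne
        exact hcond ⟨hlt, hne⟩
  · rintro ⟨a, m, rest', heq, ham, hev, hevr⟩
    obtain ⟨rfl, rfl⟩ : n1 = a ∧ m1 = m := by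
      have := heq
      simp only [List.cons.injEq, Prod.mk.injEq] at this
      exact ⟨this.1.1, this.1.2⟩
    obtain rfl : rest = rest' := by
      simp only [List.cons.injEq] at heq
      exact heq.2
    constructor
    · simp only [deltaB]
      rw [if_pos (by omega)]
    · simp only [deltaStarB, (removeLastOdd_eq_none rest).mpr hevr]
      rw [if_neg (by rintro ⟨h1, h2⟩; exact h2 hev)]
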